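/- Let j₁, j₃ be real numbers with j₁ > j₃ > 0, set z± = (j₁ ± √(j₁² − j₃²))/j₃, K = (j₃/2)^{2/3}, and let (b₁±, b₂±, b₃±) with b₁± = b₂± = (j₃/(2z±))^{1/3}, b₃± = z± b₁± be the two solutions of the system b₁(b₂² + b₃²) = j₁, b₂(b₁² + b₃²) = j₁, b₃(b₁² + b₂²) = j₃. Then for each sign, (b₁±b₂±)² + (b₂±b₃±)² + (b₃±b₁±)² = K²(1 + 2z±²)/z±^{4/3}, and the two values are different: K²(1 + 2z₊²)/z₊^{4/3} ≠ K²(1 + 2z₋²)/z₋^{4/3}. -/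

import Mathlib

private lemma invariant_aux (j₃ z b : ℝ) (hj : j₃ > 0) (hz : z > 0)
    (hb : b = (j₃ / (2 * z)) ^ ((1 : ℝ) / 3)) :
    (b * b) ^ 2 + (b * (z * b)) ^ 2 + ((z * b) * b) ^ 2
      = ((j₃ / 2) ^ ((2 : ℝ) / 3)) ^ 2 * (1 + 2 * z ^ 2) / z ^ ((4 : ℝ) / 3) := by
  have hbase : (0:ℝ) < j₃ / (2 * z) := by positivity
  have hb4 : b ^ 4 = (j₃ / 2) ^ ((4 : ℝ) / 3) / z ^ ((4 : ℝ) / 3) := by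
    rw [hb, ← Real.rpow_natCast ((j₃ / (2 * z)) ^ ((1:ℝ)/3)) 4,
      ← Real.rpow_mul hbase.le,
      show (1:ℝ)/3 * ((4:ℕ):ℝ) = (4:ℝ)/3 by push_cast; norm_num,
      show j₃ / (2 * z) = (j₃ / 2) / z by ring,
      Real.div_rpow (by positivity) hz.le]
  have hK4 : ((j₃ / 2) ^ ((2 : ℝ) / 3)) ^ 2 = (j₃ / 2) ^ ((4 : ℝ) / 3) := by
    rw [← Real.rpow_natCast ((j₃ / 2) ^ ((2:ℝ)/3)) 2, ← Real.rpow_mul (by positivity)]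
    norm_num
  have hlhs : (b * b) ^ 2 + (b * (z * b)) ^ 2 + ((z * b) * b) ^ 2
      = b ^ 4 * (1 + 2 * z ^ 2) := by ring
  rw [hlhs, hb4, hK4]
  ring

/-- Case 1 of Lemma 6 of the paper: for `j₁ = j₂ > j₃ > 0`, with
`z± = (j₁ ± √(j₁² − j₃²))/j₃`, `K = (j₃/2)^{2/3}`, and the two solutions
`b₁± = b₂± = (j₃/(2z±))^{1/3}`, `b₃± = z±b₁±` of the diagonal system, the
strength invariant satisfies
`(b₁±b₂±)² + (b₂±b₃±)² + (b₃±b₁±)² = K²(1 + 2z±²)/z±^{4/3}`, and the two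
values (for the two signs) are different. -/
theorem strength_invariant_case_a (j₁ j₃ : ℝ)
    (h₁₃ : j₁ > j₃) (h₃ : j₃ > 0)
    (zp zm K b1p b1m b2p b2m b3p b3m : ℝ)
    (hzp : zp = (j₁ + Real.sqrt (j₁ ^ 2 - j₃ ^ 2)) / j₃)
    (hzm : zm = (j₁ - Real.sqrt (j₁ ^ 2 - j₃ ^ 2)) / j₃)
    (hK : K = (j₃ / 2) ^ ((2 : ℝ) / 3))
    (hb1p : b1p = (j₃ / (2 * zp)) ^ ((1 : ℝ) / 3))
    (hb1m : b1m = (j₃ / (2 * zm)) ^ ((1 : ℝ) / 3))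
    (hb2p : b2p = b1p) (hb2m : b2m = b1m)
    (hb3p : b3p = zp * b1p) (hb3m : b3m = zm * b1m) :
    (b1p * b2p) ^ 2 + (b2p * b3p) ^ 2 + (b3p * b1p) ^ 2
      = K ^ 2 * (1 + 2 * zp ^ 2) / zp ^ ((4 : ℝ) / 3) ∧
    (b1m * b2m) ^ 2 + (b2m * b3m) ^ 2 + (b3m * b1m) ^ 2
      = K ^ 2 * (1 + 2 * zm ^ 2) / zm ^ ((4 : ℝ) / 3) ∧
    K ^ 2 * (1 + 2 * zp ^ 2) / zp ^ ((4 : ℝ) / 3)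
      ≠ K ^ 2 * (1 + 2 * zm ^ 2) / zm ^ ((4 : ℝ) / 3) := by
  set s := Real.sqrt (j₁ ^ 2 - j₃ ^ 2) with hs
  have hsub : (0:ℝ) < j₁ ^ 2 - j₃ ^ 2 := by nlinarith
  have hs2 : s ^ 2 = j₁ ^ 2 - j₃ ^ 2 := Real.sq_sqrt hsub.le
  have hspos : 0 < s := Real.sqrt_pos.mpr hsub
  have hslt : s < j₁ := by nlinarith
  have hzppos : 0 < zp := by rw [hzp]; exact div_pos (by linarith) h₃
  have hzmpos : 0 < zm := by
    rw [hzm]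
    have h' : 0 < j₁ - s := by linarith
    positivity
  have hzp1 : 1 < zp := by
    rw [hzp, lt_div_iff₀ h₃]
    nlinarith
  have hprod : zp * zm = 1 := by
    rw [hzp, hzm]
    field_simp
    nlinarith
  have hzm' : zm = zp⁻¹ := by
    field_simp
    linarith [hprod]
  refine ⟨?_, ?_, ?_⟩
  · rw [hb2p, hb3p, hK]
    exact invariant_aux j₃ zp b1p h₃ hzppos hb1p
  · rw [hb2m, hb3m, hK]
    exact invariant_aux j₃ zm b1m h₃ hzmpos hb1m
  · obtain ⟨t, htpos, htzp⟩ : ∃ t : ℝ, 0 < t ∧ zp = t ^ 3 :=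
      ⟨zp ^ ((1:ℝ)/3), Real.rpow_pos_of_pos hzppos _, by
        rw [← Real.rpow_natCast (zp ^ ((1:ℝ)/3)) 3, ← Real.rpow_mul hzppos.le]
        norm_num⟩
    have ht1 : 1 < t := by nlinarith [sq_nonneg t, sq_nonneg (t - 1), sq_nonneg (t + 1)]
    have ht4 : zp ^ ((4:ℝ)/3) = t ^ 4 := by
      rw [htzp, ← Real.rpow_natCast t 3, ← Real.rpow_mul htpos.le,
        show ((3:ℕ):ℝ) * ((4:ℝ)/3) = ((4:ℕ):ℝ) by push_cast; norm_num,
        Real.rpow_natCast]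
    have htm4 : zm ^ ((4:ℝ)/3) = (t ^ 4)⁻¹ := by
      rw [hzm', Real.inv_rpow hzppos.le, ht4]
    have hKpos : 0 < K := by rw [hK]; positivity
    intro h
    rw [ht4, htm4, hzm', htzp] at h
    have htne : t ≠ 0 := ne_of_gt htpos
    field_simp at h
    have h1 : (0:ℝ) < t ^ 2 - 1 := sub_pos.mpr (one_lt_pow₀ ht1 two_ne_zero)
    have hP : 0 < K ^ 2 * (t ^ 6 * ((t ^ 2 - 1) ^ 3 * (t ^ 2 + 1))) :=
      mul_pos (pow_pos hKpos 2) (mul_pos (pow_pos htpos 6)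
        (mul_pos (pow_pos h1 3) (by positivity)))
    have hid : K ^ 2 * (t ^ 6 * ((t ^ 2 - 1) ^ 3 * (t ^ 2 + 1)))
        = K ^ 2 * ((t ^ 3) ^ 2 + 2) * t ^ 4 * t ^ 4
          - K ^ 2 * (1 + 2 * (t ^ 3) ^ 2) * (t ^ 3) ^ 2 := by ring
    rw [show (t ^ 2 - 1) ^ 3 * (t ^ 2 + 1) = 0 by linear_combination -h] at hP
    simp at hP
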